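/- arXiv:2511.10814 — 3 statements merged into one kernel-verified Lean document; each statement's English description precedes it below -/
import Mathlib

section
/- Let n be a positive integer, k > 0, let A : ℝ → Mₙ(ℝ), and let K : ℝ → Mₙ(ℝ) be differentiable with K(t) symmetric positive definite for every t and K'(t) ⪰ A(t)·K(t) + K(t)·A(t)ᵀ + k·K(t) for all t. Let x : ℝ → ℝⁿ be differentiable with x'(t) = A(t)·x(t) for all t. Then the function V(t) := x(t)ᵀ·K(t)⁻¹·x(t) satisfies V(t) ≤ e^{−k(t−s)}·V(s) for all s ≤ t. -/
open Matrix
open scoped Matrix.Norms.L2Operator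

private lemma quadhelp {n : ℕ} (P Q : Matrix (Fin n) (Fin n) ℝ) (w : Fin n → ℝ) :
    (P *ᵥ w) ⬝ᵥ (Q *ᵥ w) = w ⬝ᵥ ((Pᵀ * Q) *ᵥ w) := by
  rw [dotProduct_mulVec, ← vecMul_transpose, vecMul_vecMul, ← dotProduct_mulVec]

private lemma quadhelp1 {n : ℕ} (P : Matrix (Fin n) (Fin n) ℝ) (w : Fin n → ℝ) :
    (P *ᵥ w) ⬝ᵥ w = w ⬝ᵥ (Pᵀ *ᵥ w) := by
  simpa using quadhelp P 1 w

noncomputable def mulVecCLM (n : ℕ) :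
    Matrix (Fin n) (Fin n) ℝ →L[ℝ] (Fin n → ℝ) →L[ℝ] (Fin n → ℝ) :=
  LinearMap.toContinuousLinearMap
    { toFun := fun M => LinearMap.toContinuousLinearMap M.mulVecLin
      map_add' := by intro M N; ext v; simp [Matrix.add_mulVec]
      map_smul' := by intro c M; ext v; simp [Matrix.smul_mulVec] }

@[simp] lemma mulVecCLM_apply {n : ℕ} (M : Matrix (Fin n) (Fin n) ℝ) (v : Fin n → ℝ) :
    mulVecCLM n M v = M *ᵥ v := rfl

/-- Lyapunov decay: if `K(t)` is differentiable, symmetric positive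
definite with `K'(t) ⪰ A(t)K(t) + K(t)A(t)ᵀ + kK(t)` (i.e. `A` is `(K, k)`-stable)
and `x' = A x`, then `V(t) = x(t)ᵀK(t)⁻¹x(t)` satisfies
`V(t) ≤ e^{-k(t-s)} V(s)` for all `s ≤ t`. -/
theorem stmt8 (n : ℕ) (k : ℝ) (hk : 0 < k)
    (A K' : ℝ → Matrix (Fin n) (Fin n) ℝ)
    (K : ℝ → Matrix (Fin n) (Fin n) ℝ)
    (hKderiv : ∀ t, HasDerivAt K (K' t) t)
    (hKpd : ∀ t, (K t).PosDef)
    (hstab : ∀ t, (K' t - (A t * K t + K t * (A t)ᵀ + k • K t)).PosSemidef)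
    (x : ℝ → Fin n → ℝ)
    (hx : ∀ t, HasDerivAt x (A t *ᵥ x t) t) :
    ∀ s t, s ≤ t →
      x t ⬝ᵥ ((K t)⁻¹ *ᵥ x t) ≤
        Real.exp (-k * (t - s)) * (x s ⬝ᵥ ((K s)⁻¹ *ᵥ x s)) := by
  have hKunit : ∀ t, IsUnit (K t) := fun t =>
    (Matrix.isUnit_iff_isUnit_det _).2 (isUnit_iff_ne_zero.2 (hKpd t).det_pos.ne')
  have hKsymm : ∀ t, (K t)ᵀ = K t := fun t => by
    simpa using (hKpd t).1.eq
  have hKM : ∀ t, K t * (K t)⁻¹ = 1 := fun t =>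
    Matrix.mul_nonsing_inv _ (isUnit_iff_ne_zero.2 (hKpd t).det_pos.ne')
  have hMK : ∀ t, (K t)⁻¹ * K t = 1 := fun t =>
    Matrix.nonsing_inv_mul _ (isUnit_iff_ne_zero.2 (hKpd t).det_pos.ne')
  -- derivative of the inverse
  have hM : ∀ t, HasDerivAt (fun t => (K t)⁻¹)
      (-((K t)⁻¹ * K' t * (K t)⁻¹)) t := by
    intro t
    obtain ⟨u, hu⟩ := hKunit t
    have h1 : (fun t => (K t)⁻¹) = fun t => Ring.inverse (K t) := by
      funext s; exact Matrix.nonsing_inv_eq_ringInverse _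
    rw [h1]
    have h0 : HasFDerivAt Ring.inverse
        (-(ContinuousLinearMap.mulLeftRight ℝ (Matrix (Fin n) (Fin n) ℝ)) ↑u⁻¹ ↑u⁻¹) (K t) := by
      rw [← hu]; exact hasFDerivAt_ringInverse u
    have h2 := h0.comp_hasDerivAt t (hKderiv t)
    have h3 : (↑u⁻¹ : Matrix (Fin n) (Fin n) ℝ) = (K t)⁻¹ := by
      rw [Matrix.coe_units_inv, hu]
    simp [h3] at h2; exact h2
  -- derivative of w t = (K t)⁻¹ *ᵥ x t
  have hy : ∀ t, HasDerivAt (fun t => (K t)⁻¹ *ᵥ x t)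
      (-(((K t)⁻¹ * K' t * (K t)⁻¹) *ᵥ x t) + ((K t)⁻¹ * A t) *ᵥ x t) t := by
    intro t
    have hc : HasDerivAt (fun t => mulVecCLM n ((K t)⁻¹))
        (mulVecCLM n (-((K t)⁻¹ * K' t * (K t)⁻¹))) t :=
      (mulVecCLM n).hasFDerivAt.comp_hasDerivAt t (hM t)
    simpa using hc.clm_apply (hx t)
  -- derivative of V
  set V : ℝ → ℝ := fun t => x t ⬝ᵥ ((K t)⁻¹ *ᵥ x t) with hVdef
  have hVd : ∀ t, HasDerivAt V
      ((A t *ᵥ x t) ⬝ᵥ ((K t)⁻¹ *ᵥ x t)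
        + x t ⬝ᵥ (-(((K t)⁻¹ * K' t * (K t)⁻¹) *ᵥ x t) + ((K t)⁻¹ * A t) *ᵥ x t)) t := by
    intro t
    have hxi := hasDerivAt_pi.1 (hx t)
    have hyi := hasDerivAt_pi.1 (hy t)
    have h := HasDerivAt.fun_sum (u := Finset.univ)
      (fun i _ => (hxi i).mul (hyi i))
    simp [dotProduct, Finset.sum_add_distrib, Finset.mul_sum] at h; exact h
  -- differential inequality
  have hineq : ∀ t, (A t *ᵥ x t) ⬝ᵥ ((K t)⁻¹ *ᵥ x t)
        + x t ⬝ᵥ (-(((K t)⁻¹ * K' t * (K t)⁻¹) *ᵥ x t) + ((K t)⁻¹ * A t) *ᵥ x t)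
      ≤ -k * V t := by
    intro t
    have hMsymm : ((K t)⁻¹)ᵀ = (K t)⁻¹ := by
      rw [Matrix.transpose_nonsing_inv, hKsymm t]
    have hMK' : ∀ Z : Matrix (Fin n) (Fin n) ℝ, (K t)⁻¹ * (K t * Z) = Z := fun Z => by
      rw [← Matrix.mul_assoc, hMK t, one_mul]
    have quadM : ∀ B : Matrix (Fin n) (Fin n) ℝ,
        ((K t)⁻¹ *ᵥ x t) ⬝ᵥ (B *ᵥ ((K t)⁻¹ *ᵥ x t))
          = x t ⬝ᵥ (((K t)⁻¹ * B * (K t)⁻¹) *ᵥ x t) := fun B => by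
      rw [Matrix.mulVec_mulVec, quadhelp, hMsymm, Matrix.mul_assoc]
    have hs : 0 ≤ ((K t)⁻¹ *ᵥ x t) ⬝ᵥ
        ((K' t - (A t * K t + K t * (A t)ᵀ + k • K t)) *ᵥ ((K t)⁻¹ *ᵥ x t)) := by
      simpa using (hstab t).dotProduct_mulVec_nonneg ((K t)⁻¹ *ᵥ x t)
    rw [quadM] at hs
    have expand : (K t)⁻¹ * (K' t - (A t * K t + K t * (A t)ᵀ + k • K t)) * (K t)⁻¹
        = (K t)⁻¹ * K' t * (K t)⁻¹
          - ((K t)⁻¹ * A t + (A t)ᵀ * (K t)⁻¹ + k • (K t)⁻¹) := by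
      simp only [Matrix.mul_sub, Matrix.sub_mul, Matrix.mul_add, Matrix.add_mul,
        Matrix.mul_smul, Matrix.smul_mul, Matrix.mul_assoc, hKM t, hMK', mul_one]
    rw [expand, Matrix.sub_mulVec, Matrix.add_mulVec, Matrix.add_mulVec,
      Matrix.smul_mulVec, dotProduct_sub, dotProduct_add, dotProduct_add,
      dotProduct_smul, smul_eq_mul] at hs
    simp only [hVdef]
    rw [quadhelp, dotProduct_add, dotProduct_neg]
    linarith
  -- Gronwall
  set g : ℝ → ℝ := fun t => Real.exp (k * t) * V t with hgdef
  have hg : ∀ t, HasDerivAt g (Real.exp (k * t) * k * V t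
      + Real.exp (k * t) * ((A t *ᵥ x t) ⬝ᵥ ((K t)⁻¹ *ᵥ x t)
        + x t ⬝ᵥ (-(((K t)⁻¹ * K' t * (K t)⁻¹) *ᵥ x t) + ((K t)⁻¹ * A t) *ᵥ x t))) t := by
    intro t
    have h1 : HasDerivAt (fun t : ℝ => k * t) k t := by
      simpa using (hasDerivAt_id t).const_mul k
    exact h1.exp.mul (hVd t)
  have hanti : Antitone g := by
    apply antitone_of_deriv_nonpos (fun t => (hg t).differentiableAt)
    intro t
    rw [(hg t).deriv]
    nlinarith [Real.exp_pos (k * t), hineq t]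
  intro s t hst
  have hmono := hanti hst
  simp only [hgdef] at hmono
  have h1 : Real.exp (-k * (t - s)) = Real.exp (k * s) / Real.exp (k * t) := by
    rw [← Real.exp_sub]; ring_nf
  show V t ≤ _ * V s
  rw [h1, div_mul_eq_mul_div, le_div_iff₀ (Real.exp_pos _)]
  nlinarith [hmono]
end

section
/- Let n be a positive integer, k > 0, 0 < m ≤ M real constants, let A : ℝ → Mₙ(ℝ), and let K : ℝ → Mₙ(ℝ) be differentiable with K(t) symmetric, m·I ⪯ K(t) ⪯ M·I, and K'(t) ⪰ A(t)·K(t) + K(t)·A(t)ᵀ + k·K(t) for all t. Let x : ℝ → ℝⁿ be differentiable with x'(t) = A(t)·x(t) for all t. Then for all s ≤ t, ‖x(t)‖ ≤ √(M/m)·e^{−(k/2)(t−s)}·‖x(s)‖. -/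
open Matrix
open scoped Matrix.Norms.L2Operator

private theorem stmt9_quadT {n : ℕ} (B : Matrix (Fin n) (Fin n) ℝ) (u : Fin n → ℝ) :
    u ⬝ᵥ (Bᵀ *ᵥ u) = u ⬝ᵥ (B *ᵥ u) := by
  rw [Matrix.dotProduct_mulVec, ← Matrix.mulVec_transpose, transpose_transpose,
    dotProduct_comm]

open scoped MatrixOrder in
private theorem stmt9_upper {n : ℕ} (c : ℝ) (Kmat : Matrix (Fin n) (Fin n) ℝ)
    (hK : Kmat.PosDef) (h : (c • (1 : Matrix (Fin n) (Fin n) ℝ) - Kmat).PosSemidef) :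
    (c • Kmat⁻¹ - 1).PosSemidef := by
  have hP : (Kmat⁻¹).PosDef := hK.inv
  set T := CFC.sqrt (Kmat⁻¹) with hT
  have hTT : T * T = Kmat⁻¹ := CFC.sqrt_mul_sqrt_self _ hP.posSemidef.nonneg
  have hTherm : Tᴴ = T := (CFC.sqrt_nonneg _).posSemidef.1
  have hTdet : IsUnit T.det := by
    have h1 : T.det * T.det = (Kmat⁻¹).det := by rw [← det_mul, hTT]
    have hd : (Kmat⁻¹).det ≠ 0 := hK.inv.det_pos.ne'
    exact isUnit_iff_ne_zero.mpr (fun h0 => hd (by rw [← h1, h0, mul_zero]))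
  have hKinv : Kmat = (Kmat⁻¹)⁻¹ :=
    (Matrix.nonsing_inv_nonsing_inv Kmat (Matrix.isUnit_iff_isUnit_det _ |>.mp hK.isUnit)).symm
  have hTKT : T * Kmat * T = 1 := by
    rw [hKinv, ← hTT, Matrix.mul_inv_rev, Matrix.mul_assoc,
      Matrix.mul_assoc T⁻¹, Matrix.nonsing_inv_mul _ hTdet, Matrix.mul_one,
      Matrix.mul_nonsing_inv _ hTdet]
  have hEq : c • Kmat⁻¹ - 1 = T * (c • (1 : Matrix (Fin n) (Fin n) ℝ) - Kmat) * T := by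
    rw [Matrix.mul_sub, Matrix.sub_mul, hTKT]
    congr 1
    rw [Matrix.mul_smul, Matrix.mul_one, Matrix.smul_mul, hTT]
  have hfin := h.mul_mul_conjTranspose_same T
  rw [hTherm] at hfin
  rw [hEq]
  exact hfin

open scoped MatrixOrder in
private theorem stmt9_lower {n : ℕ} (c : ℝ) (Kmat : Matrix (Fin n) (Fin n) ℝ)
    (hK : Kmat.PosDef) (h : (Kmat - c • (1 : Matrix (Fin n) (Fin n) ℝ)).PosSemidef) :
    ((1 : Matrix (Fin n) (Fin n) ℝ) - c • Kmat⁻¹).PosSemidef := by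
  have hP : (Kmat⁻¹).PosDef := hK.inv
  set T := CFC.sqrt (Kmat⁻¹) with hT
  have hTT : T * T = Kmat⁻¹ := CFC.sqrt_mul_sqrt_self _ hP.posSemidef.nonneg
  have hTherm : Tᴴ = T := (CFC.sqrt_nonneg _).posSemidef.1
  have hTdet : IsUnit T.det := by
    have h1 : T.det * T.det = (Kmat⁻¹).det := by rw [← det_mul, hTT]
    have hd : (Kmat⁻¹).det ≠ 0 := hK.inv.det_pos.ne'
    exact isUnit_iff_ne_zero.mpr (fun h0 => hd (by rw [← h1, h0, mul_zero]))
  have hKinv : Kmat = (Kmat⁻¹)⁻¹ :=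
    (Matrix.nonsing_inv_nonsing_inv Kmat (Matrix.isUnit_iff_isUnit_det _ |>.mp hK.isUnit)).symm
  have hTKT : T * Kmat * T = 1 := by
    rw [hKinv, ← hTT, Matrix.mul_inv_rev, Matrix.mul_assoc,
      Matrix.mul_assoc T⁻¹, Matrix.nonsing_inv_mul _ hTdet, Matrix.mul_one,
      Matrix.mul_nonsing_inv _ hTdet]
  have hEq : (1 : Matrix (Fin n) (Fin n) ℝ) - c • Kmat⁻¹
      = T * (Kmat - c • (1 : Matrix (Fin n) (Fin n) ℝ)) * T := by
    rw [Matrix.mul_sub, Matrix.sub_mul, hTKT]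
    congr 1
    rw [Matrix.mul_smul, Matrix.mul_one, Matrix.smul_mul, hTT]
  have hfin := h.mul_mul_conjTranspose_same T
  rw [hTherm] at hfin
  rw [hEq]
  exact hfin

/-- If `A(t)` is `(K(t), k)`-stable with `K(t)` symmetric and
`m·I ⪯ K(t) ⪯ M·I` (`0 < m ≤ M`), then every solution of `x' = A x` satisfies
`‖x(t)‖ ≤ √(M/m)·e^{-(k/2)(t-s)}·‖x(s)‖` for all `s ≤ t`, where `‖·‖` is the
Euclidean norm, written here as `√(x ⬝ᵥ x)`. -/
theorem stmt9 (n : ℕ) (k m M : ℝ) (hk : 0 < k) (hm : 0 < m) (hmM : m ≤ M)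
    (A K' : ℝ → Matrix (Fin n) (Fin n) ℝ)
    (K : ℝ → Matrix (Fin n) (Fin n) ℝ)
    (hKderiv : ∀ t, HasDerivAt K (K' t) t)
    (hKsymm : ∀ t, (K t).IsSymm)
    (hKlow : ∀ t, (K t - m • (1 : Matrix (Fin n) (Fin n) ℝ)).PosSemidef)
    (hKupp : ∀ t, (M • (1 : Matrix (Fin n) (Fin n) ℝ) - K t).PosSemidef)
    (hstab : ∀ t, (K' t - (A t * K t + K t * (A t)ᵀ + k • K t)).PosSemidef)
    (x : ℝ → Fin n → ℝ)
    (hx : ∀ t, HasDerivAt x (A t *ᵥ x t) t) :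
    ∀ s t, s ≤ t →
      Real.sqrt (x t ⬝ᵥ x t) ≤
        Real.sqrt (M / m) * Real.exp (-(k / 2) * (t - s)) * Real.sqrt (x s ⬝ᵥ x s) := by
  intro s t hst
  have hM0 : (0 : ℝ) < M := lt_of_lt_of_le hm hmM
  -- K is positive definite
  have hKpd : ∀ u, (K u).PosDef := by
    intro u
    refine posDef_iff_dotProduct_mulVec.mpr ⟨?_, fun v hv => ?_⟩
    · rw [IsHermitian, conjTranspose_eq_transpose_of_trivial]; exact hKsymm u
    · have h1 := (hKlow u).dotProduct_mulVec_nonneg v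
      simp only [star_trivial, sub_mulVec, dotProduct_sub, smul_mulVec, one_mulVec,
        dotProduct_smul, smul_eq_mul] at h1 ⊢
      have h0 : 0 ≤ v ⬝ᵥ v := Finset.sum_nonneg fun i _ => mul_self_nonneg _
      have h2 : 0 < v ⬝ᵥ v := by
        rcases h0.lt_or_eq with h | h
        · exact h
        · exact absurd ((dotProduct_self_eq_zero).mp h.symm) hv
      nlinarith
  have hKdet : ∀ u, IsUnit (K u).det :=
    fun u => (Matrix.isUnit_iff_isUnit_det _).mp (hKpd u).isUnit
  -- derivative of the inverse
  have hPderiv : ∀ u, HasDerivAt (fun v => (K v)⁻¹) (-((K u)⁻¹ * K' u * (K u)⁻¹)) u := by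
    intro u
    have hu : IsUnit (K u) := (hKpd u).isUnit
    have h1 := (hasFDerivAt_ringInverse (𝕜 := ℝ) hu.unit)
    rw [hu.unit_spec] at h1
    have h2 := h1.comp_hasDerivAt u (hKderiv u)
    have h3 : (↑hu.unit⁻¹ : Matrix (Fin n) (Fin n) ℝ) = (K u)⁻¹ := by
      rw [Matrix.nonsing_inv_eq_ringInverse]
      conv_rhs => rw [← hu.unit_spec]
      rw [Ring.inverse_unit]
    simp only [ContinuousLinearMap.neg_apply, ContinuousLinearMap.mulLeftRight_apply,
      h3] at h2
    have hfun : (Ring.inverse ∘ K) = fun v => (K v)⁻¹ := by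
      funext v; simp [Function.comp, Matrix.nonsing_inv_eq_ringInverse]
    rw [hfun] at h2
    convert h2 using 1
  -- entrywise derivatives
  have hPe : ∀ u i j, HasDerivAt (fun v => (K v)⁻¹ i j) ((-((K u)⁻¹ * K' u * (K u)⁻¹)) i j) u :=
    fun u i j =>
      ((Matrix.entryLinearMap ℝ ℝ i j).toContinuousLinearMap.hasFDerivAt).comp_hasDerivAt
        u (hPderiv u)
  have hxe : ∀ u i, HasDerivAt (fun v => x v i) ((A u *ᵥ x u) i) u :=
    fun u i => ((ContinuousLinearMap.proj i : (Fin n → ℝ) →L[ℝ] ℝ).hasFDerivAt).comp_hasDerivAt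
      u (hx u)
  -- the Lyapunov function
  set V : ℝ → ℝ := fun u => x u ⬝ᵥ ((K u)⁻¹ *ᵥ x u) with hVdef
  set W : ℝ → ℝ := fun u =>
    (A u *ᵥ x u) ⬝ᵥ ((K u)⁻¹ *ᵥ x u) + x u ⬝ᵥ ((-((K u)⁻¹ * K' u * (K u)⁻¹)) *ᵥ x u)
      + x u ⬝ᵥ ((K u)⁻¹ *ᵥ (A u *ᵥ x u)) with hWdef
  have hV : ∀ u, HasDerivAt V (W u) u := by
    intro u
    have key : HasDerivAt (fun v => ∑ i, x v i * ∑ j, (K v)⁻¹ i j * x v j)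
        (∑ i, ((A u *ᵥ x u) i * ∑ j, (K u)⁻¹ i j * x u j
          + x u i * ∑ j, ((-((K u)⁻¹ * K' u * (K u)⁻¹)) i j * x u j
            + (K u)⁻¹ i j * (A u *ᵥ x u) j))) u := by
      apply HasDerivAt.fun_sum
      intro i _
      exact (hxe u i).mul (HasDerivAt.fun_sum fun j _ => (hPe u i j).mul (hxe u j))
    have heq : W u = ∑ i, ((A u *ᵥ x u) i * ∑ j, (K u)⁻¹ i j * x u j
          + x u i * ∑ j, ((-((K u)⁻¹ * K' u * (K u)⁻¹)) i j * x u j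
            + (K u)⁻¹ i j * (A u *ᵥ x u) j)) := by
      rw [hWdef]
      simp only [dotProduct, mulVec, Finset.sum_add_distrib, mul_add]
      ring
    rw [heq]
    exact key
  -- the key differential inequality
  have hWle : ∀ u, W u ≤ -k * V u := by
    intro u
    rw [hWdef, hVdef]
    simp only
    set P := (K u)⁻¹ with hPdef
    set y := P *ᵥ x u with hy
    have hPsymm : Pᵀ = P := by
      rw [hPdef, Matrix.transpose_nonsing_inv, (hKsymm u).eq]
    have hxKy : x u = K u *ᵥ y := by
      rw [hy, mulVec_mulVec, Matrix.mul_nonsing_inv _ (hKdet u), one_mulVec]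
    have hxz : ∀ z, x u ⬝ᵥ (P *ᵥ z) = y ⬝ᵥ z := by
      intro z
      rw [Matrix.dotProduct_mulVec, ← Matrix.mulVec_transpose, hPsymm, ← hy]
    have h0 := (hstab u).dotProduct_mulVec_nonneg y
    simp only [star_trivial, sub_mulVec, add_mulVec, dotProduct_sub, dotProduct_add,
      smul_mulVec, dotProduct_smul, smul_eq_mul] at h0
    have e1 : (A u *ᵥ x u) ⬝ᵥ (P *ᵥ x u) = y ⬝ᵥ ((A u * K u) *ᵥ y) := by
      rw [← hy, dotProduct_comm]
      conv_lhs => rw [hxKy, mulVec_mulVec]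
    have e2 : x u ⬝ᵥ ((-(P * K' u * P)) *ᵥ x u) = -(y ⬝ᵥ (K' u *ᵥ y)) := by
      rw [neg_mulVec, dotProduct_neg, Matrix.mul_assoc, ← mulVec_mulVec, hxz,
        ← mulVec_mulVec, ← hy]
    have e3 : x u ⬝ᵥ (P *ᵥ (A u *ᵥ x u)) = y ⬝ᵥ ((A u * K u) *ᵥ y) := by
      rw [hxz]
      conv_lhs => rw [hxKy, mulVec_mulVec]
    have e4 : x u ⬝ᵥ (P *ᵥ x u) = y ⬝ᵥ (K u *ᵥ y) := by
      rw [hxz]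
      conv_lhs => rw [hxKy]
    have e5 : y ⬝ᵥ ((K u * (A u)ᵀ) *ᵥ y) = y ⬝ᵥ ((A u * K u) *ᵥ y) := by
      rw [← stmt9_quadT (A u * K u), transpose_mul, (hKsymm u).eq]
    rw [e1, e2, e3, e4]
    linarith
  -- Gronwall: V t ≤ exp (-k (t-s)) V s
  have hgron : V t ≤ Real.exp (-k * (t - s)) * V s := by
    have hg : ∀ u, HasDerivAt (fun v => Real.exp (k * v) * V v)
        (Real.exp (k * u) * k * V u + Real.exp (k * u) * W u) u := by
      intro u
      have h1 : HasDerivAt (fun v : ℝ => k * v) k u := by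
        simpa using (hasDerivAt_id u).const_mul k
      exact (h1.exp).mul (hV u)
    have hanti : Antitone (fun v => Real.exp (k * v) * V v) := by
      apply antitone_of_deriv_nonpos
      · exact fun u => (hg u).differentiableAt
      · intro u
        rw [(hg u).deriv]
        have := hWle u
        have he : 0 < Real.exp (k * u) := Real.exp_pos _
        nlinarith
    have h2 := hanti hst
    simp only at h2
    calc V t = Real.exp (-(k*t)) * (Real.exp (k*t) * V t) := by
          rw [← mul_assoc, ← Real.exp_add]; simp
      _ ≤ Real.exp (-(k*t)) * (Real.exp (k*s) * V s) :=
          mul_le_mul_of_nonneg_left h2 (Real.exp_pos _).le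
      _ = Real.exp (-k*(t-s)) * V s := by
          rw [← mul_assoc, ← Real.exp_add]; ring_nf
  -- comparison with the Euclidean norm
  have hub : ∀ u, x u ⬝ᵥ x u ≤ M * V u := by
    intro u
    have h1 := (stmt9_upper M (K u) (hKpd u) (hKupp u)).dotProduct_mulVec_nonneg (x u)
    simp only [star_trivial, sub_mulVec, dotProduct_sub, smul_mulVec, one_mulVec,
      dotProduct_smul, smul_eq_mul] at h1
    rw [hVdef]
    linarith
  have hlb : ∀ u, m * V u ≤ x u ⬝ᵥ x u := by
    intro u
    have h1 := (stmt9_lower m (K u) (hKpd u) (hKlow u)).dotProduct_mulVec_nonneg (x u)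
    simp only [star_trivial, sub_mulVec, dotProduct_sub, smul_mulVec, one_mulVec,
      dotProduct_smul, smul_eq_mul] at h1
    rw [hVdef]
    linarith
  -- put it together
  have hchain : x t ⬝ᵥ x t ≤ M / m * Real.exp (-k * (t - s)) * (x s ⬝ᵥ x s) := by
    have h1 : x t ⬝ᵥ x t ≤ M * V t := hub t
    have h2 : V t ≤ Real.exp (-k * (t - s)) * V s := hgron
    have h3 : V s ≤ (x s ⬝ᵥ x s) / m := by
      have := hlb s
      rw [le_div_iff₀ hm]
      linarith
    have he : 0 < Real.exp (-k * (t - s)) := Real.exp_pos _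
    calc x t ⬝ᵥ x t ≤ M * V t := h1
      _ ≤ M * (Real.exp (-k * (t - s)) * V s) := by
          exact mul_le_mul_of_nonneg_left h2 hM0.le
      _ ≤ M * (Real.exp (-k * (t - s)) * ((x s ⬝ᵥ x s) / m)) := by
          apply mul_le_mul_of_nonneg_left _ hM0.le
          exact mul_le_mul_of_nonneg_left h3 he.le
      _ = M / m * Real.exp (-k * (t - s)) * (x s ⬝ᵥ x s) := by ring
  have h1 := Real.sqrt_le_sqrt hchain
  calc Real.sqrt (x t ⬝ᵥ x t)
      ≤ Real.sqrt (M / m * Real.exp (-k * (t - s)) * (x s ⬝ᵥ x s)) := h1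
    _ = Real.sqrt (M / m) * Real.exp (-(k / 2) * (t - s)) * Real.sqrt (x s ⬝ᵥ x s) := by
        rw [Real.sqrt_mul (by positivity), Real.sqrt_mul (by positivity)]
        congr 1
        rw [show -k * (t - s) = -(k/2) * (t-s) + -(k/2) * (t-s) by ring, Real.exp_add,
          Real.sqrt_mul_self (Real.exp_pos _).le]
end

section
/- Let n be a positive integer and let A : ℝ → Mₙ(ℝ) be continuous with ‖A(t)‖ ≤ L for all t and some constant L. Let ζ : ℝ → Mₙ(ℝ) be the fundamental solution, i.e. ζ'(t) = A(t)·ζ(t) with ζ(0) = I, and note that ζ(t) is invertible for every t. Suppose there exist constants C, c > 0 such that ‖ζ(t)·ζ(s)⁻¹‖ ≤ C·e^{−c(t−s)} for all s ≤ t. Then for every k with 0 < k < 2c there exist constants 0 < m ≤ M and a differentiable family K : ℝ → Mₙ(ℝ) with K(t) symmetric, m·I ⪯ K(t) ⪯ M·I, and K'(t) ⪰ A(t)·K(t) + K(t)·A(t)ᵀ + k·K(t) for all t. -/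
open Matrix
open scoped Matrix.Norms.L2Operator

noncomputable def quadCLM {n : ℕ} (w : Fin n → ℝ) : Matrix (Fin n) (Fin n) ℝ →L[ℝ] ℝ :=
  LinearMap.toContinuousLinearMap
  { toFun := fun X => w ⬝ᵥ (X *ᵥ w)
    map_add' := by intro X Y; simp [Matrix.add_mulVec]
    map_smul' := by intro r X; simp [Matrix.smul_mulVec] }

lemma quadCLM_apply {n : ℕ} (w : Fin n → ℝ) (X : Matrix (Fin n) (Fin n) ℝ) :
    quadCLM w X = w ⬝ᵥ (X *ᵥ w) := rfl

noncomputable def trCLM {n : ℕ} : Matrix (Fin n) (Fin n) ℝ →L[ℝ] Matrix (Fin n) (Fin n) ℝ :=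
  LinearMap.toContinuousLinearMap
  { toFun := fun X => Xᵀ
    map_add' := fun X Y => Matrix.transpose_add X Y
    map_smul' := fun r X => Matrix.transpose_smul r X }

lemma trCLM_apply {n : ℕ} (X : Matrix (Fin n) (Fin n) ℝ) : trCLM X = Xᵀ := rfl

lemma norm_one_le' {n : ℕ} : ‖(1 : Matrix (Fin n) (Fin n) ℝ)‖ ≤ 1 := by
  rw [Matrix.cstar_norm_def, _root_.map_one]
  exact ContinuousLinearMap.norm_id_le

lemma dot_sandwich {n : ℕ} (P Q : Matrix (Fin n) (Fin n) ℝ) (v : Fin n → ℝ) :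
    v ⬝ᵥ ((P * Q * Pᵀ) *ᵥ v) = (Pᵀ *ᵥ v) ⬝ᵥ (Q *ᵥ (Pᵀ *ᵥ v)) := by
  rw [← Matrix.mulVec_mulVec, ← Matrix.mulVec_mulVec, Matrix.dotProduct_mulVec v P,
    ← Matrix.mulVec_transpose]

lemma dot_BBT {n : ℕ} (B : Matrix (Fin n) (Fin n) ℝ) (w : Fin n → ℝ) :
    w ⬝ᵥ ((B * Bᵀ) *ᵥ w) = (Bᵀ *ᵥ w) ⬝ᵥ (Bᵀ *ᵥ w) := by
  rw [← Matrix.mulVec_mulVec, Matrix.dotProduct_mulVec w B, ← Matrix.mulVec_transpose]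

lemma dot_self_eq_sq {n : ℕ} (x : Fin n → ℝ) :
    x ⬝ᵥ x = ‖(EuclideanSpace.equiv (Fin n) ℝ).symm x‖ ^ 2 := by
  rw [EuclideanSpace.norm_eq]
  rw [Real.sq_sqrt (by positivity)]
  simp [dotProduct, sq]

lemma dot_mulVec_le {n : ℕ} (B : Matrix (Fin n) (Fin n) ℝ) (v : Fin n → ℝ) :
    (Bᵀ *ᵥ v) ⬝ᵥ (Bᵀ *ᵥ v) ≤ ‖B‖ ^ 2 * (v ⬝ᵥ v) := by
  rw [dot_self_eq_sq, dot_self_eq_sq]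
  have h := Matrix.l2_opNorm_mulVec Bᵀ ((EuclideanSpace.equiv (Fin n) ℝ).symm v)
  have hBt : ‖Bᵀ‖ = ‖B‖ := by
    rw [← Matrix.conjTranspose_eq_transpose_of_trivial, Matrix.l2_opNorm_conjTranspose]
  calc ‖(EuclideanSpace.equiv (Fin n) ℝ).symm (Bᵀ *ᵥ v)‖ ^ 2
      ≤ (‖Bᵀ‖ * ‖(EuclideanSpace.equiv (Fin n) ℝ).symm v‖) ^ 2 := by
        apply pow_le_pow_left₀ (norm_nonneg _) _ 2
        exact h
    _ = ‖B‖ ^ 2 * ‖(EuclideanSpace.equiv (Fin n) ℝ).symm v‖ ^ 2 := by rw [hBt]; ring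

lemma dot_self_nonneg' {n : ℕ} (x : Fin n → ℝ) : 0 ≤ x ⬝ᵥ x := by
  rw [dot_self_eq_sq]; positivity

lemma posSemidef_of_symm {n : ℕ} (M : Matrix (Fin n) (Fin n) ℝ) (h1 : M.IsSymm)
    (h2 : ∀ v : Fin n → ℝ, 0 ≤ v ⬝ᵥ (M *ᵥ v)) : M.PosSemidef := by
  refine Matrix.posSemidef_iff_dotProduct_mulVec.mpr ⟨?_, fun x => by simpa using h2 x⟩
  rw [Matrix.IsHermitian, Matrix.conjTranspose_eq_transpose_of_trivial]
  exact h1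

lemma backward_bound {n : ℕ} {L : ℝ} (A ζ : ℝ → Matrix (Fin n) (Fin n) ℝ)
    (hAbd : ∀ t, ‖A t‖ ≤ L) (hζderiv : ∀ t, HasDerivAt ζ (A t * ζ t) t)
    (hζinv : ∀ t, IsUnit (ζ t)) {s t : ℝ} (hst : s ≤ t) :
    ‖ζ s * (ζ t)⁻¹‖ ≤ Real.exp (L * (t - s)) := by
  have hL0 : 0 ≤ L := le_trans (norm_nonneg _) (hAbd 0)
  have hζcont : Continuous ζ :=
    continuous_iff_continuousAt.mpr fun u => (hζderiv u).continuousAt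
  set f : ℝ → Matrix (Fin n) (Fin n) ℝ := fun u => ζ (t - u) * (ζ t)⁻¹ with hf
  have hfd : ∀ u : ℝ, HasDerivAt f (-(A (t - u) * f u)) u := by
    intro u
    have h1 : HasDerivAt (fun u : ℝ => t - u) (-1) u := by
      simpa using (hasDerivAt_id u).const_sub t
    have h2 : HasDerivAt (fun u : ℝ => ζ (t - u))
        ((-1 : ℝ) • (A (t - u) * ζ (t - u))) u := (hζderiv (t - u)).scomp u h1
    have h3 := h2.mul_const ((ζ t)⁻¹)
    refine h3.congr_deriv ?_
    simp [hf, Matrix.mul_assoc]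
  have key := norm_le_gronwallBound_of_norm_deriv_right_le (a := 0) (b := t - s)
    (f := f) (f' := fun u => -(A (t - u) * f u)) (δ := 1) (K := L) (ε := 0)
    (Continuous.continuousOn ((hζcont.comp (continuous_const.sub continuous_id)).mul
      continuous_const))
    (fun u _ => (hfd u).hasDerivWithinAt)
    (by
      have : f 0 = 1 := by
        simp only [hf, sub_zero]
        exact Matrix.mul_nonsing_inv _ ((Matrix.isUnit_iff_isUnit_det _).mp (hζinv t))
      rw [this]; exact norm_one_le')
    (fun u _ => by
      rw [norm_neg, add_zero]
      calc ‖A (t - u) * f u‖ ≤ ‖A (t - u)‖ * ‖f u‖ := norm_mul_le _ _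
        _ ≤ L * ‖f u‖ := mul_le_mul_of_nonneg_right (hAbd _) (norm_nonneg _))
  have := key (t - s) ⟨by linarith, le_refl _⟩
  rw [gronwallBound_ε0] at this
  simpa [hf, mul_comm] using this

set_option maxHeartbeats 1000000 in
/-- If `A(t)` is continuous and uniformly bounded and its fundamental
solution `ζ` (with `ζ' = Aζ`, `ζ(0) = I`, `ζ(t)` invertible) satisfies
`‖ζ(t)ζ(s)⁻¹‖ ≤ C·e^{-c(t-s)}` for `s ≤ t` (exponential stability), then for every
`0 < k < 2c` there is a differentiable, uniformly bounded and elliptic symmetric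
family `K(t)` such that `A(t)` is `(K(t), k)`-stable. -/
theorem stmt10 (n : ℕ) (L C c : ℝ) (hC : 0 < C) (hc : 0 < c)
    (A ζ : ℝ → Matrix (Fin n) (Fin n) ℝ)
    (hAcont : Continuous A) (hAbd : ∀ t, ‖A t‖ ≤ L)
    (hζderiv : ∀ t, HasDerivAt ζ (A t * ζ t) t)
    (hζ0 : ζ 0 = 1)
    (hζinv : ∀ t, IsUnit (ζ t))
    (hdecay : ∀ s t, s ≤ t → ‖ζ t * (ζ s)⁻¹‖ ≤ C * Real.exp (-c * (t - s))) :
    ∀ k : ℝ, 0 < k → k < 2 * c →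
      ∃ (m M : ℝ) (K K' : ℝ → Matrix (Fin n) (Fin n) ℝ),
        0 < m ∧ m ≤ M ∧
        (∀ t, HasDerivAt K (K' t) t) ∧
        (∀ t, (K t).IsSymm) ∧
        (∀ t, (K t - m • (1 : Matrix (Fin n) (Fin n) ℝ)).PosSemidef) ∧
        (∀ t, (M • (1 : Matrix (Fin n) (Fin n) ℝ) - K t).PosSemidef) ∧
        (∀ t, (K' t - (A t * K t + K t * (A t)ᵀ + k • K t)).PosSemidef) := by
  intro k hk hkc
  have hL0 : 0 ≤ L := le_trans (norm_nonneg _) (hAbd 0)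
  have h2ck : 0 < 2 * c - k := by linarith
  set T : ℝ := max 1 ((2 * Real.log C) / (2 * c - k)) with hTdef
  have hT1 : 1 ≤ T := le_max_left _ _
  have hT0 : 0 < T := lt_of_lt_of_le one_pos hT1
  have hlogT : 2 * Real.log C ≤ (2 * c - k) * T := by
    have h := le_max_right 1 ((2 * Real.log C) / (2 * c - k))
    calc 2 * Real.log C = ((2 * Real.log C) / (2 * c - k)) * (2 * c - k) := by
          field_simp
      _ ≤ T * (2 * c - k) := mul_le_mul_of_nonneg_right (h.trans_eq hTdef.symm) h2ck.le
      _ = (2 * c - k) * T := mul_comm _ _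
  have hC2 : Real.exp (2 * Real.log C) = C ^ 2 := by
    rw [two_mul, Real.exp_add, Real.exp_log hC]; ring
  have hTkey : Real.exp (k * T) * (C * Real.exp (-c * T)) ^ 2 ≤ 1 := by
    have : Real.exp (k * T) * (C * Real.exp (-c * T)) ^ 2
        = Real.exp (2 * Real.log C + (k * T + (-c * T) + (-c * T))) := by
      rw [Real.exp_add, hC2, Real.exp_add, Real.exp_add]; ring
    rw [this, Real.exp_le_one_iff]
    nlinarith
  have hζcont : Continuous ζ :=
    continuous_iff_continuousAt.mpr fun u => (hζderiv u).continuousAt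
  have hinvcont : Continuous (fun u => (ζ u)⁻¹) := by
    apply continuous_iff_continuousAt.mpr
    intro u
    have h1 : ∀ x : ℝ, (ζ x)⁻¹ = Ring.inverse (ζ x) := fun x =>
      Matrix.nonsing_inv_eq_ringInverse _
    simp only [h1]
    have h2 : ContinuousAt Ring.inverse (ζ u) := by
      simpa [(hζinv u).unit_spec] using NormedRing.inverse_continuousAt (hζinv u).unit
    exact h2.comp hζcont.continuousAt
  -- the integrand
  set g : ℝ → Matrix (Fin n) (Fin n) ℝ :=
    fun s => Real.exp (-(k * s)) • ((ζ s)⁻¹ * ((ζ s)⁻¹)ᵀ) with hgdef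
  have hgsymm : ∀ s, (g s)ᵀ = g s := by
    intro s
    simp [hgdef, Matrix.transpose_smul, Matrix.transpose_mul, Matrix.mul_assoc]
  have hgcont : Continuous g := by
    refine Continuous.smul (f := fun s => Real.exp (-(k * s))) (g := fun s => (ζ s)⁻¹ * ((ζ s)⁻¹)ᵀ) ?_ ?_
    · exact Real.continuous_exp.comp ((continuous_const.mul continuous_id).neg)
    · exact hinvcont.mul (trCLM.continuous.comp hinvcont)
  have hgint : ∀ a b : ℝ, IntervalIntegrable g MeasureTheory.volume a b :=
    fun a b => hgcont.intervalIntegrable a b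
  set F : ℝ → Matrix (Fin n) (Fin n) ℝ := fun u => ∫ s in (u - T)..u, g s with hFdef
  have hFd : ∀ u, HasDerivAt F (g u - g (u - T)) u := by
    intro u
    have hI : ∀ x : ℝ, HasDerivAt (fun y : ℝ => ∫ s in (0:ℝ)..y, g s) (g x) x := by
      intro x
      exact intervalIntegral.integral_hasDerivAt_right (hgint 0 x)
        (hgcont.stronglyMeasurable.stronglyMeasurableAtFilter) hgcont.continuousAt
    have hsplit : F = fun y : ℝ => (∫ s in (0:ℝ)..y, g s) - ∫ s in (0:ℝ)..(y - T), g s := by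
      funext y
      rw [hFdef]
      exact (intervalIntegral.integral_interval_sub_left (hgint 0 y) (hgint 0 (y - T))).symm
    rw [hsplit]
    have h2 : HasDerivAt (fun y : ℝ => ∫ s in (0:ℝ)..(y - T), g s) (g (u - T)) u := by
      have := (hI (u - T)).scomp u ((hasDerivAt_id u).sub_const T)
      exact this.congr_deriv (one_smul _ _)
    exact (hI u).sub h2
  set H : ℝ → Matrix (Fin n) (Fin n) ℝ := fun u => Real.exp (k * u) • F u with hHdef
  set H' : ℝ → Matrix (Fin n) (Fin n) ℝ :=
    fun u => Real.exp (k * u) • (g u - g (u - T)) + (Real.exp (k * u) * k) • F u with hH'def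
  have hHd : ∀ u, HasDerivAt H (H' u) u := by
    intro u
    have h1 : HasDerivAt (fun y : ℝ => k * y) k u := by
      simpa using (hasDerivAt_id u).const_mul k
    exact h1.exp.smul (hFd u)
  set K : ℝ → Matrix (Fin n) (Fin n) ℝ := fun u => ζ u * H u * (ζ u)ᵀ with hKdef
  set K' : ℝ → Matrix (Fin n) (Fin n) ℝ :=
    fun u => (A u * ζ u * H u + ζ u * H' u) * (ζ u)ᵀ + ζ u * H u * (A u * ζ u)ᵀ with hK'def
  have hKd : ∀ u, HasDerivAt K (K' u) u := by
    intro u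
    have htr : HasDerivAt (fun y => (ζ y)ᵀ) ((A u * ζ u)ᵀ) u :=
      trCLM.hasFDerivAt.comp_hasDerivAt u (hζderiv u)
    exact ((hζderiv u).mul (hHd u)).mul htr
  -- quadratic form formula
  have hquad : ∀ t (v : Fin n → ℝ), v ⬝ᵥ (K t *ᵥ v) =
      ∫ s in (t - T)..t, Real.exp (k * t) * quadCLM ((ζ t)ᵀ *ᵥ v) (g s) := by
    intro t v
    rw [hKdef]
    calc v ⬝ᵥ ((ζ t * H t * (ζ t)ᵀ) *ᵥ v)
        = ((ζ t)ᵀ *ᵥ v) ⬝ᵥ (H t *ᵥ ((ζ t)ᵀ *ᵥ v)) := dot_sandwich _ _ _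
      _ = Real.exp (k * t) * quadCLM ((ζ t)ᵀ *ᵥ v) (F t) := by
          rw [hHdef]
          show ((ζ t)ᵀ *ᵥ v) ⬝ᵥ ((Real.exp (k * t) • F t) *ᵥ ((ζ t)ᵀ *ᵥ v)) = _
          rw [Matrix.smul_mulVec, dotProduct_smul, smul_eq_mul, quadCLM_apply]
      _ = Real.exp (k * t) * ∫ s in (t - T)..t, quadCLM ((ζ t)ᵀ *ᵥ v) (g s) := by
          rw [← (quadCLM ((ζ t)ᵀ *ᵥ v)).intervalIntegral_comp_comm (hgint _ _)]
      _ = ∫ s in (t - T)..t, Real.exp (k * t) * quadCLM ((ζ t)ᵀ *ᵥ v) (g s) := by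
          rw [intervalIntegral.integral_const_mul]
  -- pointwise evaluation of the integrand
  have hptwise : ∀ t (v : Fin n → ℝ) (s : ℝ),
      Real.exp (k * t) * quadCLM ((ζ t)ᵀ *ᵥ v) (g s) =
      Real.exp (k * (t - s)) *
        (((ζ t * (ζ s)⁻¹)ᵀ *ᵥ v) ⬝ᵥ (((ζ t * (ζ s)⁻¹)ᵀ *ᵥ v))) := by
    intro t v s
    rw [hgdef, quadCLM_apply]
    rw [Matrix.smul_mulVec, dotProduct_smul, smul_eq_mul, dot_BBT]
    have harg : ((ζ s)⁻¹)ᵀ *ᵥ ((ζ t)ᵀ *ᵥ v) = (ζ t * (ζ s)⁻¹)ᵀ *ᵥ v := by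
      rw [Matrix.transpose_mul, Matrix.mulVec_mulVec]
    rw [harg]
    rw [show Real.exp (k * (t - s)) = Real.exp (k * t) * Real.exp (-(k * s)) by
      rw [← Real.exp_add]; ring_nf]
    ring
  -- constants
  set m : ℝ := T * Real.exp (-|k - 2 * L| * T) with hmdef
  set M : ℝ := m + T * (Real.exp (k * T) * C ^ 2) with hMdef
  have hm0 : 0 < m := mul_pos hT0 (Real.exp_pos _)
  have hmM : m ≤ M := by
    have : 0 ≤ T * (Real.exp (k * T) * C ^ 2) := by positivity
    linarith
  have hicont : ∀ t (v : Fin n → ℝ),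
      Continuous fun s => Real.exp (k * t) * quadCLM ((ζ t)ᵀ *ᵥ v) (g s) :=
    fun t v => continuous_const.mul ((quadCLM _).continuous.comp hgcont)
  have hlow_pt : ∀ t (v : Fin n → ℝ), ∀ s ∈ Set.Icc (t - T) t,
      Real.exp (-|k - 2 * L| * T) * (v ⬝ᵥ v) ≤
        Real.exp (k * t) * quadCLM ((ζ t)ᵀ *ᵥ v) (g s) := by
    intro t v s hs
    rw [hptwise]
    set x := (ζ t * (ζ s)⁻¹)ᵀ *ᵥ v with hxdef
    have hts0 : 0 ≤ t - s := by linarith [hs.2]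
    have htsT : t - s ≤ T := by linarith [hs.1]
    have hq0 : 0 ≤ x ⬝ᵥ x := dot_self_nonneg' x
    have hΨ : ‖ζ s * (ζ t)⁻¹‖ ≤ Real.exp (L * (t - s)) :=
      backward_bound A ζ hAbd hζderiv hζinv hs.2
    have hv : v = (ζ s * (ζ t)⁻¹)ᵀ *ᵥ x := by
      rw [hxdef, Matrix.mulVec_mulVec, ← Matrix.transpose_mul]
      have h1 : ζ t * (ζ s)⁻¹ * (ζ s * (ζ t)⁻¹) = 1 := by
        rw [Matrix.mul_assoc, ← Matrix.mul_assoc ((ζ s)⁻¹),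
          Matrix.nonsing_inv_mul _ ((Matrix.isUnit_iff_isUnit_det _).mp (hζinv s)),
          Matrix.one_mul,
          Matrix.mul_nonsing_inv _ ((Matrix.isUnit_iff_isUnit_det _).mp (hζinv t))]
      rw [h1, Matrix.transpose_one, Matrix.one_mulVec]
    have hnsq : v ⬝ᵥ v ≤ Real.exp (L * (t - s)) ^ 2 * (x ⬝ᵥ x) := by
      calc v ⬝ᵥ v = ((ζ s * (ζ t)⁻¹)ᵀ *ᵥ x) ⬝ᵥ ((ζ s * (ζ t)⁻¹)ᵀ *ᵥ x) := by rw [← hv]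
        _ ≤ ‖ζ s * (ζ t)⁻¹‖ ^ 2 * (x ⬝ᵥ x) := dot_mulVec_le _ _
        _ ≤ Real.exp (L * (t - s)) ^ 2 * (x ⬝ᵥ x) := by
            apply mul_le_mul_of_nonneg_right _ hq0
            exact pow_le_pow_left₀ (norm_nonneg _) hΨ 2
    have hexpsq : Real.exp (L * (t - s)) ^ 2 = Real.exp (2 * L * (t - s)) := by
      rw [sq, ← Real.exp_add]; ring_nf
    have harg : -|k - 2 * L| * T + 2 * L * (t - s) ≤ k * (t - s) := by
      have h1 : (2 * L - k) * (t - s) ≤ |k - 2 * L| * (t - s) := by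
        apply mul_le_mul_of_nonneg_right _ hts0
        rw [abs_sub_comm]
        exact le_abs_self _
      have h2 : |k - 2 * L| * (t - s) ≤ |k - 2 * L| * T :=
        mul_le_mul_of_nonneg_left htsT (abs_nonneg _)
      nlinarith
    calc Real.exp (-|k - 2 * L| * T) * (v ⬝ᵥ v)
        ≤ Real.exp (-|k - 2 * L| * T) * (Real.exp (2 * L * (t - s)) * (x ⬝ᵥ x)) := by
          apply mul_le_mul_of_nonneg_left _ (Real.exp_pos _).le
          rw [← hexpsq]; exact hnsq
      _ = Real.exp (-|k - 2 * L| * T + 2 * L * (t - s)) * (x ⬝ᵥ x) := by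
          rw [Real.exp_add]; ring
      _ ≤ Real.exp (k * (t - s)) * (x ⬝ᵥ x) :=
          mul_le_mul_of_nonneg_right (Real.exp_le_exp.mpr harg) hq0
  have hup_pt : ∀ t (v : Fin n → ℝ), ∀ s ∈ Set.Icc (t - T) t,
      Real.exp (k * t) * quadCLM ((ζ t)ᵀ *ᵥ v) (g s) ≤
        Real.exp (k * T) * C ^ 2 * (v ⬝ᵥ v) := by
    intro t v s hs
    rw [hptwise]
    set x := (ζ t * (ζ s)⁻¹)ᵀ *ᵥ v with hxdef
    have hts0 : 0 ≤ t - s := by linarith [hs.2]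
    have htsT : t - s ≤ T := by linarith [hs.1]
    have hnsq0 : 0 ≤ v ⬝ᵥ v := dot_self_nonneg' v
    have hq0 : 0 ≤ x ⬝ᵥ x := dot_self_nonneg' x
    have hΦ : ‖ζ t * (ζ s)⁻¹‖ ≤ C * Real.exp (-c * (t - s)) := hdecay s t hs.2
    have h1 : x ⬝ᵥ x ≤ (C * Real.exp (-c * (t - s))) ^ 2 * (v ⬝ᵥ v) := by
      calc x ⬝ᵥ x ≤ ‖ζ t * (ζ s)⁻¹‖ ^ 2 * (v ⬝ᵥ v) := dot_mulVec_le _ _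
        _ ≤ _ := mul_le_mul_of_nonneg_right (pow_le_pow_left₀ (norm_nonneg _) hΦ 2) hnsq0
    have h2 : (C * Real.exp (-c * (t - s))) ^ 2 ≤ C ^ 2 := by
      have he : Real.exp (-c * (t - s)) ≤ 1 := Real.exp_le_one_iff.mpr (by nlinarith)
      have he0 : 0 ≤ Real.exp (-c * (t - s)) := (Real.exp_pos _).le
      have he2 : Real.exp (-c * (t - s)) ^ 2 ≤ 1 := pow_le_one₀ he0 he
      calc (C * Real.exp (-c * (t - s))) ^ 2 = C ^ 2 * Real.exp (-c * (t - s)) ^ 2 := by ring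
        _ ≤ C ^ 2 * 1 := by nlinarith
        _ = C ^ 2 := by ring
    have h3 : Real.exp (k * (t - s)) ≤ Real.exp (k * T) :=
      Real.exp_le_exp.mpr (mul_le_mul_of_nonneg_left htsT hk.le)
    calc Real.exp (k * (t - s)) * (x ⬝ᵥ x) ≤ Real.exp (k * T) * (x ⬝ᵥ x) :=
          mul_le_mul_of_nonneg_right h3 hq0
      _ ≤ Real.exp (k * T) * (C ^ 2 * (v ⬝ᵥ v)) := by
          apply mul_le_mul_of_nonneg_left _ (Real.exp_pos _).le
          nlinarith
      _ = Real.exp (k * T) * C ^ 2 * (v ⬝ᵥ v) := by ring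
  have hKlow : ∀ t (v : Fin n → ℝ), m * (v ⬝ᵥ v) ≤ v ⬝ᵥ (K t *ᵥ v) := by
    intro t v
    rw [hquad t v]
    have hint := intervalIntegral.integral_mono_on (by linarith : t - T ≤ t)
      (intervalIntegrable_const (μ := MeasureTheory.volume))
      ((hicont t v).intervalIntegrable _ _) (hlow_pt t v)
    rw [intervalIntegral.integral_const] at hint
    have h4 : t - (t - T) = T := by ring
    rw [h4, smul_eq_mul] at hint
    calc m * (v ⬝ᵥ v) = T * (Real.exp (-|k - 2 * L| * T) * (v ⬝ᵥ v)) := by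
          rw [hmdef]; ring
      _ ≤ _ := hint
  have hKup : ∀ t (v : Fin n → ℝ),
      v ⬝ᵥ (K t *ᵥ v) ≤ T * (Real.exp (k * T) * C ^ 2) * (v ⬝ᵥ v) := by
    intro t v
    rw [hquad t v]
    have hint := intervalIntegral.integral_mono_on (by linarith : t - T ≤ t)
      ((hicont t v).intervalIntegrable _ _)
      (intervalIntegrable_const (μ := MeasureTheory.volume)) (hup_pt t v)
    rw [intervalIntegral.integral_const] at hint
    have h4 : t - (t - T) = T := by ring
    rw [h4, smul_eq_mul] at hint
    calc _ ≤ T * (Real.exp (k * T) * C ^ 2 * (v ⬝ᵥ v)) := hint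
      _ = T * (Real.exp (k * T) * C ^ 2) * (v ⬝ᵥ v) := by ring
  -- symmetry
  have hFsym : ∀ t, (F t)ᵀ = F t := by
    intro t
    have h1 := trCLM.intervalIntegral_comp_comm (hgint (t - T) t)
    have h2 : (∫ s in (t - T)..t, trCLM (g s)) = ∫ s in (t - T)..t, g s := by
      apply intervalIntegral.integral_congr
      intro s _
      show trCLM (g s) = g s
      rw [trCLM_apply, hgsymm]
    calc (F t)ᵀ = trCLM (F t) := rfl
      _ = ∫ s in (t - T)..t, trCLM (g s) := h1.symm
      _ = F t := h2
  have hHsym : ∀ t, (H t)ᵀ = H t := by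
    intro t
    show (Real.exp (k * t) • F t)ᵀ = Real.exp (k * t) • F t
    rw [Matrix.transpose_smul, hFsym]
  have hKsym : ∀ t, (K t).IsSymm := by
    intro t
    show (ζ t * H t * (ζ t)ᵀ)ᵀ = ζ t * H t * (ζ t)ᵀ
    rw [Matrix.transpose_mul, Matrix.transpose_mul, Matrix.transpose_transpose, hHsym,
      ← Matrix.mul_assoc]
  have hKsym' : ∀ t, (K t)ᵀ = K t := hKsym
  -- PSD lower
  have hpsd1 : ∀ t, (K t - m • (1 : Matrix (Fin n) (Fin n) ℝ)).PosSemidef := by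
    intro t
    apply posSemidef_of_symm
    · show (K t - m • 1)ᵀ = K t - m • 1
      rw [Matrix.transpose_sub, Matrix.transpose_smul, Matrix.transpose_one, hKsym']
    · intro v
      rw [Matrix.sub_mulVec, dotProduct_sub, Matrix.smul_mulVec,
        Matrix.one_mulVec, dotProduct_smul, smul_eq_mul]
      linarith [hKlow t v]
  have hpsd2 : ∀ t, (M • (1 : Matrix (Fin n) (Fin n) ℝ) - K t).PosSemidef := by
    intro t
    apply posSemidef_of_symm
    · show (M • 1 - K t)ᵀ = M • 1 - K t
      rw [Matrix.transpose_sub, Matrix.transpose_smul, Matrix.transpose_one, hKsym']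
    · intro v
      rw [Matrix.sub_mulVec, dotProduct_sub, Matrix.smul_mulVec,
        Matrix.one_mulVec, dotProduct_smul, smul_eq_mul]
      have h5 := hKup t v
      have h6 : 0 ≤ m * (v ⬝ᵥ v) := mul_nonneg hm0.le (dot_self_nonneg' v)
      rw [hMdef]
      nlinarith
  -- the stability inequality
  have hdiff : ∀ t, K' t - (A t * K t + K t * (A t)ᵀ + k • K t) =
      1 - Real.exp (k * T) • ((ζ t * (ζ (t - T))⁻¹) * (ζ t * (ζ (t - T))⁻¹)ᵀ) := by
    intro t
    have hdt : IsUnit (ζ t).det := (Matrix.isUnit_iff_isUnit_det _).mp (hζinv t)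
    have h1 : ζ t * (ζ t)⁻¹ = 1 := Matrix.mul_nonsing_inv _ hdt
    have h1T : ((ζ t)⁻¹)ᵀ * (ζ t)ᵀ = 1 := by
      rw [← Matrix.transpose_mul, h1, Matrix.transpose_one]
    have e1 : Real.exp (k * t) * Real.exp (-(k * t)) = 1 := by
      rw [← Real.exp_add]; simp
    have e2 : Real.exp (k * t) * Real.exp (-(k * (t - T))) = Real.exp (k * T) := by
      rw [← Real.exp_add]; congr 1; ring
    rw [hK'def, hKdef, hH'def, hHdef, hgdef]
    simp only [smul_sub, Matrix.mul_add, Matrix.add_mul, Matrix.mul_sub, Matrix.sub_mul,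
      smul_mul_assoc, mul_smul_comm, smul_smul, Matrix.transpose_mul, Matrix.transpose_smul,
      Matrix.mul_assoc]
    rw [h1T]
    simp only [Matrix.mul_one, h1, e1, e2, one_smul]
    module
  have hpsd3 : ∀ t, (K' t - (A t * K t + K t * (A t)ᵀ + k • K t)).PosSemidef := by
    intro t
    rw [hdiff t]
    set Φ := ζ t * (ζ (t - T))⁻¹ with hΦdef
    apply posSemidef_of_symm
    · show (1 - Real.exp (k * T) • (Φ * Φᵀ))ᵀ = 1 - Real.exp (k * T) • (Φ * Φᵀ)
      rw [Matrix.transpose_sub, Matrix.transpose_one, Matrix.transpose_smul,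
        Matrix.transpose_mul, Matrix.transpose_transpose]
    · intro v
      rw [Matrix.sub_mulVec, dotProduct_sub, Matrix.one_mulVec,
        Matrix.smul_mulVec, dotProduct_smul, smul_eq_mul, dot_BBT]
      have hΦn : ‖Φ‖ ≤ C * Real.exp (-c * T) := by
        have := hdecay (t - T) t (by linarith)
        rw [sub_sub_cancel] at this
        exact this
      have h1 : (Φᵀ *ᵥ v) ⬝ᵥ (Φᵀ *ᵥ v) ≤ ‖Φ‖ ^ 2 * (v ⬝ᵥ v) := dot_mulVec_le _ _
      have h2 : ‖Φ‖ ^ 2 ≤ (C * Real.exp (-c * T)) ^ 2 :=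
        pow_le_pow_left₀ (norm_nonneg _) hΦn 2
      have hnsq : 0 ≤ v ⬝ᵥ v := dot_self_nonneg' v
      have hq0 : 0 ≤ (Φᵀ *ᵥ v) ⬝ᵥ (Φᵀ *ᵥ v) := dot_self_nonneg' _
      have hE : (0 : ℝ) < Real.exp (k * T) := Real.exp_pos _
      nlinarith [mul_le_mul_of_nonneg_left h1 hE.le,
        mul_le_mul_of_nonneg_right h2 hnsq,
        mul_le_mul_of_nonneg_right hTkey hnsq]
  exact ⟨m, M, K, K', hm0, hmM, hKd, hKsym, hpsd1, hpsd2, hpsd3⟩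
end
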